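/- Let m ≥ 2 and n₁,…,n_m ≥ 2 be integers, let S = [n₁] × ⋯ × [n_m], and let C = (C_α)_{α∈S} be complex numbers with C_α ≠ 0 for all α. Let P = (P₁,…,P_ℓ) be an ordered partition of S that respects the ordering of each [n_i], in the sense that if α ∈ P_q and γ_i < α_i, then (α₁,…,α_{i−1},γ_i,α_{i+1},…,α_m) ∈ P_r for some r < q. Define U_{C,P} := {ψ ∈ ℂ^{n₁} ⊗ ⋯ ⊗ ℂ^{n_m} : Σ_{α∈P_i} C_α ψ_α = 0 for all i ∈ [ℓ]}, where ψ_α is the coordinate of ψ in the standard product basis. Then U_{C,P} is completely entangled, i.e. it contains no nonzero product vector. -/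

import Mathlib

/-
Common definitions.

We model the tensor product `ℂ^{n₁} ⊗ ⋯ ⊗ ℂ^{n_m}` concretely as
`EuclideanSpace ℂ (∀ i, Fin (n i))` (coordinates with respect to the standard
product basis), and the `d`-fold tensor power `(ℂ^a)^{⊗ d}` as
`EuclideanSpace ℂ (ι → Fin a)` for an index type `ι` of cardinality `d`.
-/

noncomputable section

open Finset

/-- The product (elementary tensor) vector `φ₁ ⊗ ⋯ ⊗ φ_m` in a multipartite space,
in coordinates. -/
def prodVec {m : ℕ} {n : Fin m → ℕ} (φ : ∀ i, EuclideanSpace ℂ (Fin (n i))) :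
    EuclideanSpace ℂ (∀ i, Fin (n i)) :=
  WithLp.toLp 2 (fun v => ∏ i, φ i (v i))

/-- The product vector `φ₁ ⊗ ⋯ ⊗ φ_m` in `(ℂ^n)^{⊗ m}`, in coordinates. -/
def prodVecC {m n : ℕ} (φ : Fin m → EuclideanSpace ℂ (Fin n)) :
    EuclideanSpace ℂ (Fin m → Fin n) :=
  WithLp.toLp 2 (fun v => ∏ i, φ i (v i))

/-- The product vector `φ₁ ⊗ φ₂` in a bipartite space, in coordinates. -/
def prodVec2 {ι₁ ι₂ : Type*} (φ₁ : EuclideanSpace ℂ ι₁) (φ₂ : EuclideanSpace ℂ ι₂) :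
    EuclideanSpace ℂ (ι₁ × ι₂) :=
  WithLp.toLp 2 (fun p => φ₁ p.1 * φ₂ p.2)

/-- Geometric measure of entanglement of a subspace of a multipartite space:
`E(U) = inf { 1 - ⟨φ₁⊗⋯⊗φ_m, Π_U (φ₁⊗⋯⊗φ_m)⟩ : ‖φ_i‖ = 1 }`, where we use that
`⟨x, Π_U x⟩ = ‖Π_U x‖²`. -/
def gme {m : ℕ} {n : Fin m → ℕ} (U : Submodule ℂ (EuclideanSpace ℂ (∀ i, Fin (n i)))) : ℝ :=
  sInf {x | ∃ φ : ∀ i, EuclideanSpace ℂ (Fin (n i)),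
    (∀ i, ‖φ i‖ = 1) ∧ x = 1 - ‖U.orthogonalProjectionOnto (prodVec φ)‖ ^ 2}

/-- Geometric measure of entanglement of a subspace of `(ℂ^n)^{⊗ m}`. -/
def gmeC {m n : ℕ} (U : Submodule ℂ (EuclideanSpace ℂ (Fin m → Fin n))) : ℝ :=
  sInf {x | ∃ φ : Fin m → EuclideanSpace ℂ (Fin n),
    (∀ i, ‖φ i‖ = 1) ∧ x = 1 - ‖U.orthogonalProjectionOnto (prodVecC φ)‖ ^ 2}

/-- Geometric measure of entanglement of a subspace of a bipartite space. -/
def gme2 {ι₁ ι₂ : Type*} [Fintype ι₁] [Fintype ι₂]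
    (U : Submodule ℂ (EuclideanSpace ℂ (ι₁ × ι₂))) : ℝ :=
  sInf {x | ∃ (φ₁ : EuclideanSpace ℂ ι₁) (φ₂ : EuclideanSpace ℂ ι₂),
    ‖φ₁‖ = 1 ∧ ‖φ₂‖ = 1 ∧ x = 1 - ‖U.orthogonalProjectionOnto (prodVec2 φ₁ φ₂)‖ ^ 2}

/-- The symmetric subspace `S^{|ι|}(ℂ^a)` of `(ℂ^a)^{⊗ ι}`: tensors invariant under all
permutations of the tensor factors. -/
def symmSub (a : ℕ) (ι : Type*) : Submodule ℂ (EuclideanSpace ℂ (ι → Fin a)) where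
  carrier := {ψ | ∀ σ : Equiv.Perm ι, ∀ v : ι → Fin a, ψ (v ∘ σ) = ψ v}
  zero_mem' := fun _ _ => rfl
  add_mem' := by
    intro x y hx hy σ v
    show x (v ∘ σ) + y (v ∘ σ) = x v + y v
    rw [hx σ v, hy σ v]
  smul_mem' := by
    intro c x hx σ v
    show c * x (v ∘ σ) = c * x v
    rw [hx σ v]

/-- Splitting an index `v : Fin d ⊕ Fin d → Fin a` into a pair of indices, realizing
`(ℂ^a)^{⊗ 2d} ≅ (ℂ^a)^{⊗ d} ⊗ (ℂ^a)^{⊗ d}`. -/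
def pairSplit {a d : ℕ} (v : (Fin d ⊕ Fin d) → Fin a) : (Fin d → Fin a) × (Fin d → Fin a) :=
  (v ∘ Sum.inl, v ∘ Sum.inr)

/-- The symmetric subspace `S^{2d}(ℂ^a)`, viewed inside
`(ℂ^a)^{⊗ d} ⊗ (ℂ^a)^{⊗ d} = EuclideanSpace ℂ ((Fin d → Fin a) × (Fin d → Fin a))`. -/
def symmSub2 (a d : ℕ) :
    Submodule ℂ (EuclideanSpace ℂ ((Fin d → Fin a) × (Fin d → Fin a))) where
  carrier := {ψ | ∀ σ : Equiv.Perm (Fin d ⊕ Fin d), ∀ v : (Fin d ⊕ Fin d) → Fin a,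
    ψ (pairSplit (v ∘ σ)) = ψ (pairSplit v)}
  zero_mem' := fun _ _ => rfl
  add_mem' := by
    intro x y hx hy σ v
    show x (pairSplit (v ∘ σ)) + y (pairSplit (v ∘ σ)) = x (pairSplit v) + y (pairSplit v)
    rw [hx σ v, hy σ v]
  smul_mem' := by
    intro c x hx σ v
    show c * x (pairSplit (v ∘ σ)) = c * x (pairSplit v)
    rw [hx σ v]

/-- The tensor product `W₁ ⊗ W₂` of subspaces, as the span of the elementary tensors,
inside the concrete bipartite space. -/
def tensorPairs {ι₁ ι₂ : Type*} [Fintype ι₁] [Fintype ι₂]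
    (W₁ : Submodule ℂ (EuclideanSpace ℂ ι₁)) (W₂ : Submodule ℂ (EuclideanSpace ℂ ι₂)) :
    Submodule ℂ (EuclideanSpace ℂ (ι₁ × ι₂)) :=
  Submodule.span ℂ {χ | ∃ ψ ∈ W₁, ∃ φ ∈ W₂, χ = prodVec2 ψ φ}

/-- The tensor product `U ⊗ V` of two bipartite subspaces
`U, V ⊆ ℂ^{ι₁} ⊗ ℂ^{ι₂}`, viewed as a bipartite subspace of
`(ℂ^{ι₁} ⊗ ℂ^{ι₁}) ⊗ (ℂ^{ι₂} ⊗ ℂ^{ι₂})` via the regrouping isomorphism that swaps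
the middle two tensor factors. -/
def tensorSub {ι₁ ι₂ : Type*} [Fintype ι₁] [Fintype ι₂]
    (U V : Submodule ℂ (EuclideanSpace ℂ (ι₁ × ι₂))) :
    Submodule ℂ (EuclideanSpace ℂ ((ι₁ × ι₁) × (ι₂ × ι₂))) :=
  Submodule.span ℂ {χ | ∃ ψ ∈ U, ∃ φ ∈ V,
    χ = WithLp.toLp 2 (fun p => ψ (p.1.1, p.2.1) * φ (p.1.2, p.2.2))}

/-- Entrywise complex conjugate of a vector, with respect to the standard basis. -/
def conjVec {ι : Type*} (ψ : EuclideanSpace ℂ ι) : EuclideanSpace ℂ ι :=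
  WithLp.toLp 2 (fun v => starRingEnd ℂ (ψ v))

/-- The subspace `Ū` of entrywise complex conjugates of vectors of `U`. -/
def conjSubmodule {ι : Type*} (U : Submodule ℂ (EuclideanSpace ℂ ι)) :
    Submodule ℂ (EuclideanSpace ℂ ι) where
  carrier := conjVec '' U
  zero_mem' := ⟨0, U.zero_mem, by
    ext v; simp [conjVec]⟩
  add_mem' := by
    rintro a b ⟨x, hx, rfl⟩ ⟨y, hy, rfl⟩
    exact ⟨x + y, U.add_mem hx hy, by
      ext v; simp [conjVec]⟩
  smul_mem' := by
    rintro c a ⟨x, hx, rfl⟩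
    refine ⟨starRingEnd ℂ c • x, U.smul_mem _ hx, ?_⟩
    ext v
    simp [conjVec]

/-- The content (type) of a word `w : Fin d → Fin a`: the vector `α ∈ ℤ_{≥0}^a`
recording how many times each letter occurs. -/
def wordContent {a d : ℕ} (w : Fin d → Fin a) : Fin a → ℕ :=
  fun i => (Finset.univ.filter fun j => w j = i).card

/-- The monomial orthonormal basis vector `|α⟩ = C(d,α)^{1/2} Π_{S^d(ℂ^a)} (e₁^{⊗α₁} ⊗ ⋯ ⊗ e_a^{⊗α_a})`
of the symmetric subspace `S^d(ℂ^a)`, where `α = wordContent w` and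
`e₁^{⊗α₁} ⊗ ⋯ ⊗ e_a^{⊗α_a}` is the standard basis vector of `(ℂ^a)^{⊗ d}` indexed by any word `w`
of content `α` (the projection does not depend on the choice of such a word). -/
def monVec (a d : ℕ) (w : Fin d → Fin a) : EuclideanSpace ℂ (Fin d → Fin a) :=
  (Real.sqrt (Nat.multinomial Finset.univ (wordContent w)) : ℂ) •
    ((symmSub a (Fin d)).orthogonalProjectionOnto (EuclideanSpace.single w 1) :
      EuclideanSpace ℂ (Fin d → Fin a))

/-- The squared Schmidt coefficients of a bipartite vector `ψ`, i.e. the eigenvalues of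
`M Mᴴ` where `M` is the coefficient matrix of `ψ`. -/
def schmidtSqCoeffs {ι₁ ι₂ : Type*} [Fintype ι₁] [Fintype ι₂] [DecidableEq ι₁]
    (ψ : EuclideanSpace ℂ (ι₁ × ι₂)) : ι₁ → ℝ :=
  (Matrix.isHermitian_mul_conjTranspose_self (Matrix.of fun i j => ψ (i, j))).eigenvalues

/-- The Rényi `p`-entropy of (the squared Schmidt coefficients of) a bipartite vector. -/
def renyiEnt (p : ℝ) {ι₁ ι₂ : Type*} [Fintype ι₁] [Fintype ι₂] [DecidableEq ι₁]
    (ψ : EuclideanSpace ℂ (ι₁ × ι₂)) : ℝ :=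
  (1 / (1 - p)) * Real.logb 2 (∑ i, schmidtSqCoeffs ψ i ^ p)

/-- The minimum output Rényi `p`-entropy of a bipartite subspace. -/
def hminEnt (p : ℝ) {ι₁ ι₂ : Type*} [Fintype ι₁] [Fintype ι₂] [DecidableEq ι₁]
    (U : Submodule ℂ (EuclideanSpace ℂ (ι₁ × ι₂))) : ℝ :=
  sInf {x | ∃ ψ ∈ U, ‖ψ‖ = 1 ∧ x = renyiEnt p ψ}

end

/-- If `P` is an ordered partition of the index set respecting the order of
each factor, then the subspace `U_{C,P}` is completely entangled. -/
theorem stmt1 (m : ℕ) (hm : 2 ≤ m) (n : Fin m → ℕ) (hn : ∀ i, 2 ≤ n i)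
    (C : (∀ i, Fin (n i)) → ℂ) (hC : ∀ α, C α ≠ 0)
    (L : ℕ) (P : Fin L → Finset (∀ i, Fin (n i)))
    (hpart : ∀ α : ∀ i, Fin (n i), ∃! q : Fin L, α ∈ P q)
    (horder : ∀ q : Fin L, ∀ α ∈ P q, ∀ (i : Fin m) (γ : Fin (n i)), γ < α i →
      ∃ r : Fin L, r < q ∧ Function.update α i γ ∈ P r)
    (U : Submodule ℂ (EuclideanSpace ℂ (∀ i, Fin (n i))))
    (hU : ∀ ψ : EuclideanSpace ℂ (∀ i, Fin (n i)), ψ ∈ U ↔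
      ∀ q : Fin L, ∑ α ∈ P q, C α * ψ α = 0) :
    ∀ φ : ∀ i, EuclideanSpace ℂ (Fin (n i)), prodVec φ ∈ U → prodVec φ = 0 := by
  classical
  intro φ hmem
  by_contra h0
  obtain ⟨v, hv⟩ : ∃ v, prodVec φ v ≠ 0 := by
    by_contra h; push_neg at h; exact h0 (PiLp.ext h)
  have hvi : ∀ i, φ i (v i) ≠ 0 := by
    intro i
    have := Finset.prod_ne_zero_iff.mp (show ∏ i, φ i (v i) ≠ 0 from hv)
    exact this i (Finset.mem_univ i)
  have hne : ∀ i, (Finset.univ.filter fun j => φ i j ≠ 0).Nonempty :=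
    fun i => ⟨v i, by simp [hvi i]⟩
  set α : ∀ i, Fin (n i) := fun i => (Finset.univ.filter fun j => φ i j ≠ 0).min' (hne i)
    with hα
  have hαnz : ∀ i, φ i (α i) ≠ 0 := by
    intro i
    have := Finset.min'_mem _ (hne i)
    simpa using this
  have hαmin : ∀ i, ∀ j : Fin (n i), φ i j ≠ 0 → α i ≤ j := by
    intro i j hj
    exact Finset.min'_le _ _ (by simp [hj])
  have huniq : ∀ β (q q' : Fin L), β ∈ P q → β ∈ P q' → q = q' :=
    fun β q q' h h' => ((hpart β).unique h h')
  -- key lemma: componentwise larger indices live in strictly later parts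
  have key : ∀ k : ℕ, ∀ (a b : ∀ i, Fin (n i)) (q r : Fin L),
      (∑ i, ((b i : ℕ) - (a i : ℕ))) = k → (∀ i, a i ≤ b i) → b ≠ a →
      b ∈ P q → a ∈ P r → r < q := by
    intro k
    induction k using Nat.strong_induction_on with
    | _ k ih =>
      intro a b q r hsum hle hbne hb ha
      obtain ⟨j, hj⟩ : ∃ j, a j < b j := by
        by_contra h
        push_neg at h
        exact hbne (funext fun i => le_antisymm (h i) (hle i))
      obtain ⟨r', hr', hmem'⟩ := horder q b hb j (a j) hj
      by_cases hcase : Function.update b j (a j) = a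
      · rw [hcase] at hmem'
        have := huniq a r' r hmem' ha
        exact this ▸ hr'
      · have hfun : (fun i => ((Function.update b j (a j) i : ℕ) - (a i : ℕ)))
            = Function.update (fun i => (b i : ℕ) - (a i : ℕ)) j 0 := by
          funext i
          by_cases hij : i = j
          · subst hij; simp
          · simp [Function.update_of_ne hij]
        have hlt : (∑ i, ((Function.update b j (a j) i : ℕ) - (a i : ℕ))) < k := by
          rw [hfun]
          rw [Finset.sum_update_of_mem (Finset.mem_univ j)]
          rw [← hsum, ← Finset.sum_erase_add _ _ (Finset.mem_univ j), Finset.erase_eq]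
          have : 0 < (b j : ℕ) - (a j : ℕ) := by
            have := (Fin.lt_iff_val_lt_val.mp hj); omega
          omega
        have hle' : ∀ i, a i ≤ Function.update b j (a j) i := by
          intro i
          by_cases hij : i = j
          · subst hij; simp
          · simp [Function.update_of_ne hij, hle i]
        exact lt_trans (ih _ hlt a _ r' r rfl hle' hcase hmem' ha) hr'
  obtain ⟨q₀, hq₀⟩ := (hpart α).exists
  have hsum0 := (hU _).mp hmem q₀
  have hsingle : ∑ β ∈ P q₀, C β * prodVec φ β = C α * prodVec φ α := by
    apply Finset.sum_eq_single α
    · intro β hβ hβne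
      by_cases hz : prodVec φ β = 0
      · rw [hz, mul_zero]
      · exfalso
        have hβi : ∀ i, φ i (β i) ≠ 0 := by
          intro i
          exact Finset.prod_ne_zero_iff.mp (show ∏ i, φ i (β i) ≠ 0 from hz) i (Finset.mem_univ i)
        have hle : ∀ i, α i ≤ β i := fun i => hαmin i (β i) (hβi i)
        exact lt_irrefl q₀ (key _ α β q₀ q₀ rfl hle hβne hβ hq₀)
    · intro h; exact absurd hq₀ h
  rw [hsingle] at hsum0
  have : prodVec φ α ≠ 0 := show ∏ i, φ i (α i) ≠ 0 from Finset.prod_ne_zero_iff.mpr fun i _ => hαnz i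
  exact this (by
    rcases mul_eq_zero.mp hsum0 with h | h
    · exact absurd h (hC α)
    · exact h)
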